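/- Let N ∈ ℕ with N ≥ 1 and let f and g be probability distributions on ℕ with the same mean value and with supp(f) ∪ supp(g) ⊆ {0, 1, ..., N}. Let F_n = ∑_{k=0}^n f_k and G_n = ∑_{k=0}^n g_k. Then for every z ∈ (0,1), |f̂(z) − ĝ(z)| / (1−z)^2 = |∑_{n=1}^N (F_n − G_n) ∑_{k=0}^{n−1} z^k|. -/

import Mathlib

open scoped ENNReal

noncomputable section

/-- `f` is a probability distribution on `ℕ`. -/
def IsProbN (f : ℕ → ℝ) : Prop := (∀ n, 0 ≤ f n) ∧ HasSum f 1

/-- `π` is a coupling of the probability distributions `f` and `g` on `ℕ`. -/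
def IsCouplingN (π : ℕ → ℕ → ℝ) (f g : ℕ → ℝ) : Prop :=
  (∀ i j, 0 ≤ π i j) ∧ (∀ i, HasSum (fun j => π i j) (f i)) ∧
    (∀ j, HasSum (fun i => π i j) (g j))

/-- The Wasserstein distance of order `p` between probability distributions on `ℕ`. -/
def WassersteinN (p : ℝ) (f g : ℕ → ℝ) : ℝ≥0∞ :=
  (⨅ π : {π : ℕ → ℕ → ℝ // IsCouplingN π f g},
    ∑' (i : ℕ) (j : ℕ), ENNReal.ofReal (π.1 i j) * ENNReal.ofReal (|(i : ℝ) - (j : ℝ)| ^ p)) ^ (1 / p)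

/-- The probability generating function of `f`. -/
def pgfN (f : ℕ → ℝ) (z : ℝ) : ℝ := ∑' n : ℕ, z ^ n * f n

/-- The Toscani (Fourier-based) distance of order `s` between probability
distributions on `ℕ`. -/
def ToscaniN (s : ℝ) (f g : ℕ → ℝ) : ℝ≥0∞ :=
  ⨆ z : Set.Ioo (0 : ℝ) 1, ENNReal.ofReal (|pgfN f z - pgfN g z| / (1 - (z : ℝ)) ^ s)


/-- For `N ≥ 1` and probability distributions `f, g` on `ℕ` with the
same mean value and support contained in `{0, 1, …, N}`, with `Fₙ = ∑_{k=0}^n f_k` and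
`Gₙ = ∑_{k=0}^n g_k`, for every `z ∈ (0,1)` one has
`|f̂(z) − ĝ(z)| / (1 − z)² = |∑_{n=1}^N (Fₙ − Gₙ) ∑_{k=0}^{n-1} z^k|`. -/
lemma key_abel (z : ℝ) : ∀ (N : ℕ) (h : ℕ → ℝ),
    ∑ n ∈ Finset.range (N+1), z^n * h n
      + (1-z)^2 * ∑ n ∈ Finset.Icc 1 N,
          (∑ k ∈ Finset.range (n+1), h k) * ∑ k ∈ Finset.range n, z^k
    = ((1-z)*((N:ℝ)+1) + z^(N+1)) * ∑ n ∈ Finset.range (N+1), h n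
      - (1-z) * ∑ n ∈ Finset.range (N+1), (n:ℝ) * h n := by
  intro N
  induction N with
  | zero => intro h; simp
  | succ N ih =>
    intro h
    have hgeom : (1-z) * ∑ k ∈ Finset.range (N+1), z^k = 1 - z^(N+1) := by
      have := geom_sum_mul z (N+1)
      linear_combination -this
    rw [Finset.sum_Icc_succ_top (by omega : 1 ≤ N+1),
      Finset.sum_range_succ (f := fun n => z^n * h n),
      Finset.sum_range_succ (f := h),
      Finset.sum_range_succ (f := fun n => (n:ℝ) * h n)]
    have := ih h
    push_cast
    linear_combination this + (1-z) * (∑ k ∈ Finset.range (N+1), h k + h (N+1)) * hgeom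

theorem pgf_diff_eq_cdf_sum (N : ℕ) (hN : 1 ≤ N) (f g : ℕ → ℝ)
    (hf : IsProbN f) (hg : IsProbN g)
    (hfsupp : ∀ n : ℕ, N < n → f n = 0) (hgsupp : ∀ n : ℕ, N < n → g n = 0)
    (hmean : ∑' n : ℕ, (n : ℝ) * f n = ∑' n : ℕ, (n : ℝ) * g n)
    (z : ℝ) (hz : z ∈ Set.Ioo (0 : ℝ) 1) :
    |pgfN f z - pgfN g z| / (1 - z) ^ 2 =
      |∑ n ∈ Finset.Icc 1 N,
        ((∑ k ∈ Finset.range (n + 1), f k) - ∑ k ∈ Finset.range (n + 1), g k) *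
          ∑ k ∈ Finset.range n, z ^ k| := by
  obtain ⟨hz0, hz1⟩ := hz
  have hnotin : ∀ n : ℕ, n ∉ Finset.range (N+1) → N < n := fun n hn => by
    simp [Finset.mem_range] at hn; omega
  have hf1 : ∑ n ∈ Finset.range (N+1), f n = 1 := by
    rw [← hf.2.tsum_eq]
    exact (tsum_eq_sum (fun n hn => hfsupp n (hnotin n hn))).symm
  have hg1 : ∑ n ∈ Finset.range (N+1), g n = 1 := by
    rw [← hg.2.tsum_eq]
    exact (tsum_eq_sum (fun n hn => hgsupp n (hnotin n hn))).symm
  have hpf : pgfN f z = ∑ n ∈ Finset.range (N+1), z^n * f n := by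
    exact tsum_eq_sum (fun n hn => by
      rw [hfsupp n (hnotin n hn)]; ring)
  have hpg : pgfN g z = ∑ n ∈ Finset.range (N+1), z^n * g n := by
    exact tsum_eq_sum (fun n hn => by
      rw [hgsupp n (hnotin n hn)]; ring)
  have hmf : (∑' n : ℕ, (n : ℝ) * f n) = ∑ n ∈ Finset.range (N+1), (n:ℝ) * f n :=
    tsum_eq_sum (fun n hn => by
      rw [hfsupp n (hnotin n hn)]; ring)
  have hmg : (∑' n : ℕ, (n : ℝ) * g n) = ∑ n ∈ Finset.range (N+1), (n:ℝ) * g n :=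
    tsum_eq_sum (fun n hn => by
      rw [hgsupp n (hnotin n hn)]; ring)
  have hmean' : ∑ n ∈ Finset.range (N+1), (n:ℝ) * f n
      = ∑ n ∈ Finset.range (N+1), (n:ℝ) * g n := by
    rw [← hmf, ← hmg]; exact hmean
  have hkey := key_abel z N (fun n => f n - g n)
  simp only [Finset.sum_sub_distrib] at hkey
  have hsum0 : (∑ n ∈ Finset.range (N+1), f n) - ∑ n ∈ Finset.range (N+1), g n = 0 := by
    rw [hf1, hg1]; ring
  have hS : ∀ n : ℕ, ∑ k ∈ Finset.range (n+1), (f k - g k)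
      = (∑ k ∈ Finset.range (n+1), f k) - ∑ k ∈ Finset.range (n+1), g k :=
    fun n => Finset.sum_sub_distrib _ _
  have hdiff : pgfN f z - pgfN g z
      = -((1-z)^2 * ∑ n ∈ Finset.Icc 1 N,
          ((∑ k ∈ Finset.range (n+1), f k) - ∑ k ∈ Finset.range (n+1), g k) *
            ∑ k ∈ Finset.range n, z^k) := by
    rw [hpf, hpg]
    have hm0 : (∑ n ∈ Finset.range (N+1), (n:ℝ) * f n)
        - ∑ n ∈ Finset.range (N+1), (n:ℝ) * g n = 0 := by rw [hmean']; ring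
    simp only [mul_sub, Finset.sum_sub_distrib] at hkey
    linear_combination hkey + ((1-z)*((N:ℝ)+1) + z^(N+1)) * hsum0 - (1-z) * hm0
  rw [hdiff, abs_neg, abs_mul, abs_of_pos (pow_pos (by linarith : (0:ℝ) < 1 - z) 2)]
  rw [mul_comm]
  exact mul_div_cancel_right₀ _ (ne_of_gt (pow_pos (by linarith) 2))

end
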